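/- Let F be a finite field and let M, K, W be mutually independent random vectors, uniformly distributed over F^t, F^Δ, F^Θ respectively. Let A, B, G be matrices over F with k rows and t, Δ, Θ columns respectively, and let C = AM + BK + GW ∈ F^k. Then the total variation distance ‖p_{M,C} − p_M ⊗ p_C‖₁ is either equal to 0 or at least 1 − 1/|F| ≥ 1/2. Consequently, if ‖p_{M,C} − p_M ⊗ p_C‖₁ ≤ ε for some ε < 1/2, then M and C are independent, i.e., p_{M,C} = p_M ⊗ p_C (perfect secrecy holds). -/

import Mathlib

open Finset

noncomputable section

/-- Sample space: the triple `(M, K, W)` of mutually independent uniform random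
vectors over `F^t × F^Δ × F^Θ`, modeled as the uniform distribution on this product. -/
abbrev SampleSpace (F : Type) (t Δ Θ : ℕ) : Type :=
  (Fin t → F) × (Fin Δ → F) × (Fin Θ → F)

/-- Joint pmf of `(M, C)` where `C = A M + B K + G W` and `(M,K,W)` is uniform on the
sample space. -/
def jointMC {F : Type} [Field F] [Fintype F] [DecidableEq F] {k t Δ Θ : ℕ}
    (A : Matrix (Fin k) (Fin t) F) (B : Matrix (Fin k) (Fin Δ) F)
    (G : Matrix (Fin k) (Fin Θ) F) (m : Fin t → F) (c : Fin k → F) : ℝ :=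
  ((univ.filter (fun ω : SampleSpace F t Δ Θ =>
      ω.1 = m ∧ A.mulVec ω.1 + B.mulVec ω.2.1 + G.mulVec ω.2.2 = c)).card : ℝ) /
    (Fintype.card (SampleSpace F t Δ Θ) : ℝ)

/-- Marginal pmf of `M`. -/
def pM {F : Type} [Field F] [Fintype F] [DecidableEq F] {k t Δ Θ : ℕ}
    (A : Matrix (Fin k) (Fin t) F) (B : Matrix (Fin k) (Fin Δ) F)
    (G : Matrix (Fin k) (Fin Θ) F) (m : Fin t → F) : ℝ :=
  ∑ c : Fin k → F, jointMC A B G m c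

/-- Marginal pmf of `C`. -/
def pC {F : Type} [Field F] [Fintype F] [DecidableEq F] {k t Δ Θ : ℕ}
    (A : Matrix (Fin k) (Fin t) F) (B : Matrix (Fin k) (Fin Δ) F)
    (G : Matrix (Fin k) (Fin Θ) F) (c : Fin k → F) : ℝ :=
  ∑ m : Fin t → F, jointMC A B G m c

/-- Total variation distance `‖p_{M,C} − p_M ⊗ p_C‖₁`. -/
def tvMC {F : Type} [Field F] [Fintype F] [DecidableEq F] {k t Δ Θ : ℕ}
    (A : Matrix (Fin k) (Fin t) F) (B : Matrix (Fin k) (Fin Δ) F)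
    (G : Matrix (Fin k) (Fin Θ) F) : ℝ :=
  2⁻¹ * ∑ m : Fin t → F, ∑ c : Fin k → F,
    |jointMC A B G m c - pM A B G m * pC A B G c|

namespace TVaux

variable {F : Type} [Field F] [Fintype F] [DecidableEq F] {k t Δ Θ : ℕ}

/-- fibers of a linear map between finite spaces all have the kernel's cardinality -/
lemma fiber_card_eq {V W : Type*} [AddCommGroup V] [AddCommGroup W] [Module F V] [Module F W]
    [Fintype V] [DecidableEq W] (f : V →ₗ[F] W) {y : W} (x₀ : V) (h : f x₀ = y) :
    (univ.filter fun v => f v = y).card = (univ.filter fun v => f v = 0).card := by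
  refine Finset.card_bij' (fun v _ => v - x₀) (fun v _ => v + x₀) ?_ ?_ ?_ ?_
  · intro a ha
    simp only [mem_filter, mem_univ, true_and] at ha ⊢
    rw [map_sub, ha, h, sub_self]
  · intro a ha
    simp only [mem_filter, mem_univ, true_and] at ha ⊢
    rw [map_add, ha, h, zero_add]
  · intro a _; simp
  · intro a _; simp

variable (A : Matrix (Fin k) (Fin t) F) (B : Matrix (Fin k) (Fin Δ) F)
    (G : Matrix (Fin k) (Fin Θ) F)

def Lm : ((Fin Δ → F) × (Fin Θ → F)) →ₗ[F] (Fin k → F) :=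
  B.mulVecLin.coprod G.mulVecLin

def κn : ℕ := (univ.filter fun p : (Fin Δ → F) × (Fin Θ → F) => Lm B G p = 0).card

def fib (v : Fin k → F) : ℕ := (univ.filter fun p => Lm B G p = v).card

lemma fib_of_mem {v : Fin k → F} (h : ∃ p, Lm B G p = v) : fib B G v = κn B G := by
  obtain ⟨p, hp⟩ := h
  exact fiber_card_eq (Lm B G) p hp

lemma fib_of_not {v : Fin k → F} (h : ¬ ∃ p, Lm B G p = v) : fib B G v = 0 := by
  rw [fib, Finset.card_eq_zero, Finset.filter_eq_empty_iff]
  intro p _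
  exact fun hp => h ⟨p, hp⟩

def Dn : ℕ := Fintype.card ((Fin Δ → F) × (Fin Θ → F))

def Nn : ℕ := Fintype.card (Fin t → F)

lemma joint_eq (m : Fin t → F) (c : Fin k → F) :
    jointMC A B G m c = (fib B G (c - A.mulVec m) : ℝ) / ((Nn (F := F) (t := t)) * (Dn (F := F) (Δ := Δ) (Θ := Θ))) := by
  have hcard : (Fintype.card (SampleSpace F t Δ Θ) : ℝ)
      = (Nn (F := F) (t := t)) * (Dn (F := F) (Δ := Δ) (Θ := Θ)) := by
    rw [Nn, Dn]
    push_cast [SampleSpace, Fintype.card_prod]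
    ring
  rw [jointMC, hcard]
  congr 1
  norm_cast
  refine Finset.card_bij' (fun ω _ => ω.2) (fun p _ => (m, p)) ?_ ?_ ?_ ?_
  · intro ω hω
    simp only [mem_filter, mem_univ, true_and] at hω ⊢
    obtain ⟨h1, h2⟩ := hω
    simp only [Lm, LinearMap.coprod_apply, Matrix.mulVecLin_apply]
    rw [eq_sub_iff_add_eq, ← h2, h1]
    abel
  · intro p hp
    simp only [mem_filter, mem_univ, true_and] at hp ⊢
    simp only [Lm, LinearMap.coprod_apply, Matrix.mulVecLin_apply] at hp
    rw [eq_sub_iff_add_eq] at hp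
    rw [← hp]
    abel
  · intro ω hω
    simp only [mem_filter, mem_univ, true_and] at hω
    cases ω
    simp_all
  · intro p _
    rfl

lemma sum_fib : ∑ v : Fin k → F, (fib B G v : ℕ) = Dn (F := F) (Δ := Δ) (Θ := Θ) := by
  rw [Dn, ← Finset.card_univ]
  exact (Finset.card_eq_sum_card_fiberwise (fun x _ => Finset.mem_univ (Lm B G x))).symm

def Rcard : ℕ := (univ.filter fun v : Fin k → F => ∃ p, Lm B G p = v).card

lemma Rcard_mul : Rcard B G * κn B G = Dn (F := F) (Δ := Δ) (Θ := Θ) := by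
  rw [← sum_fib (B := B) (G := G)]
  rw [eq_comm]
  have : ∀ v : Fin k → F, fib B G v = if ∃ p, Lm B G p = v then κn B G else 0 := by
    intro v
    by_cases h : ∃ p, Lm B G p = v
    · rw [fib_of_mem B G h, if_pos h]
    · rw [fib_of_not B G h, if_neg h]
  calc ∑ v : Fin k → F, fib B G v
      = ∑ v : Fin k → F, if ∃ p, Lm B G p = v then κn B G else 0 := by
        exact Finset.sum_congr rfl fun v _ => this v
    _ = ∑ _v ∈ univ.filter (fun v : Fin k → F => ∃ p, Lm B G p = v), κn B G := by
        rw [Finset.sum_filter]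
    _ = Rcard B G * κn B G := by rw [Finset.sum_const, Rcard, smul_eq_mul]


lemma Nn_pos : (0:ℝ) < (Nn (F:=F) (t:=t) : ℝ) := by
  exact_mod_cast Fintype.card_pos (α := Fin t → F)

lemma Dn_pos : (0:ℝ) < (Dn (F:=F) (Δ:=Δ) (Θ:=Θ) : ℝ) := by
  exact_mod_cast Fintype.card_pos (α := (Fin Δ → F) × (Fin Θ → F))

lemma sum_fib_shift (w : Fin k → F) :
    ∑ c : Fin k → F, (fib B G (c - w) : ℝ) = (Dn (F:=F) (Δ:=Δ) (Θ:=Θ) : ℝ) := by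
  rw [Fintype.sum_equiv (Equiv.subRight w) (fun c => (fib B G (c - w) : ℝ))
    (fun v => (fib B G v : ℝ)) (fun c => rfl)]
  rw [← Nat.cast_sum]
  exact_mod_cast congrArg (Nat.cast (R := ℝ)) (sum_fib B G)

lemma pM_eq (m : Fin t → F) : pM A B G m = ((Nn (F:=F) (t:=t) : ℝ))⁻¹ := by
  rw [pM]
  calc ∑ c : Fin k → F, jointMC A B G m c
      = (∑ c : Fin k → F, (fib B G (c - A.mulVec m) : ℝ)) /
        ((Nn (F:=F) (t:=t)) * (Dn (F:=F) (Δ:=Δ) (Θ:=Θ))) := by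
        rw [Finset.sum_div]; exact Finset.sum_congr rfl fun c _ => joint_eq A B G m c
    _ = (Dn (F:=F) (Δ:=Δ) (Θ:=Θ) : ℝ) / ((Nn (F:=F) (t:=t)) * (Dn (F:=F) (Δ:=Δ) (Θ:=Θ))) := by
        rw [sum_fib_shift]
    _ = ((Nn (F:=F) (t:=t) : ℝ))⁻¹ := by
        have hN := Nn_pos (F:=F) (t:=t)
        have hD := Dn_pos (F:=F) (Δ:=Δ) (Θ:=Θ)
        field_simp

def Mc (c : Fin k → F) : Finset (Fin t → F) :=
  univ.filter fun m => ∃ p, Lm B G p = c - A.mulVec m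

def Tset : Finset (Fin t → F) :=
  univ.filter fun m => ∃ p, Lm B G p = A.mulVec m

lemma Mc_card {c : Fin k → F} {m₀ : Fin t → F} (h : m₀ ∈ Mc A B G c) :
    (Mc A B G c).card = (Tset A B G).card := by
  simp only [Mc, mem_filter, mem_univ, true_and] at h
  obtain ⟨p₀, hp₀⟩ := h
  refine Finset.card_bij' (fun m _ => m - m₀) (fun m _ => m + m₀) ?_ ?_ ?_ ?_
  · intro a ha
    simp only [Mc, Tset, mem_filter, mem_univ, true_and] at ha ⊢
    obtain ⟨p, hp⟩ := ha
    refine ⟨p₀ - p, ?_⟩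
    have hsub : A.mulVec (a - m₀) = A.mulVec a - A.mulVec m₀ := by
      simpa [Matrix.mulVecLin_apply] using (map_sub A.mulVecLin a m₀)
    rw [map_sub, hp, hp₀, hsub]
    abel
  · intro a ha
    simp only [Mc, Tset, mem_filter, mem_univ, true_and] at ha ⊢
    obtain ⟨p, hp⟩ := ha
    refine ⟨p₀ - p, ?_⟩
    have hadd : A.mulVec (a + m₀) = A.mulVec a + A.mulVec m₀ := by
      simpa [Matrix.mulVecLin_apply] using (map_add A.mulVecLin a m₀)
    rw [map_sub, hp, hp₀, hadd]
    abel
  · intro a _; simp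
  · intro a _; simp

lemma pC_eq (c : Fin k → F) :
    pC A B G c = (κn B G : ℝ) * ((Mc A B G c).card : ℝ) /
      ((Nn (F:=F) (t:=t)) * (Dn (F:=F) (Δ:=Δ) (Θ:=Θ))) := by
  rw [pC]
  calc ∑ m : Fin t → F, jointMC A B G m c
      = (∑ m : Fin t → F, (fib B G (c - A.mulVec m) : ℝ)) /
        ((Nn (F:=F) (t:=t)) * (Dn (F:=F) (Δ:=Δ) (Θ:=Θ))) := by
        rw [Finset.sum_div]; exact Finset.sum_congr rfl fun m _ => joint_eq A B G m c
    _ = _ := by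
        congr 1
        calc ∑ m : Fin t → F, (fib B G (c - A.mulVec m) : ℝ)
            = ∑ m : Fin t → F, (if ∃ p, Lm B G p = c - A.mulVec m then (κn B G : ℝ) else 0) := by
              refine Finset.sum_congr rfl fun m _ => ?_
              by_cases h : ∃ p, Lm B G p = c - A.mulVec m
              · rw [fib_of_mem B G h, if_pos h]
              · rw [fib_of_not B G h, if_neg h]; norm_num
          _ = ∑ _m ∈ Mc A B G c, (κn B G : ℝ) := by rw [Mc, Finset.sum_filter]
          _ = (κn B G : ℝ) * ((Mc A B G c).card : ℝ) := by
              rw [Finset.sum_const, nsmul_eq_mul, mul_comm]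

def coset (m : Fin t → F) : Finset (Fin k → F) :=
  univ.filter fun c => ∃ p, Lm B G p = c - A.mulVec m

lemma mem_coset_iff {m : Fin t → F} {c : Fin k → F} :
    c ∈ coset A B G m ↔ m ∈ Mc A B G c := by
  simp [coset, Mc]

lemma coset_card (m : Fin t → F) : (coset A B G m).card = Rcard B G := by
  refine Finset.card_bij' (fun c _ => c - A.mulVec m) (fun v _ => v + A.mulVec m) ?_ ?_ ?_ ?_
  · intro a ha
    simp only [coset, Rcard, mem_filter, mem_univ, true_and] at ha ⊢
    exact ha
  · intro a ha
    simp only [coset, Rcard, mem_filter, mem_univ, true_and] at ha ⊢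
    simpa using ha
  · intro a _; simp
  · intro a _; simp

lemma joint_off (m : Fin t → F) {c : Fin k → F} (h : c ∉ coset A B G m) :
    jointMC A B G m c = 0 := by
  rw [joint_eq, fib_of_not]
  · norm_num
  · intro hc
    exact h (by simpa [coset] using hc)

lemma joint_on (m : Fin t → F) {c : Fin k → F} (h : c ∈ coset A B G m) :
    jointMC A B G m c = (κn B G : ℝ) /
      ((Nn (F:=F) (t:=t)) * (Dn (F:=F) (Δ:=Δ) (Θ:=Θ))) := by
  rw [joint_eq, fib_of_mem]
  simpa [coset] using h

lemma sum_pC : ∑ c : Fin k → F, pC A B G c = 1 := by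
  simp only [pC]
  rw [Finset.sum_comm]
  calc ∑ m : Fin t → F, ∑ c : Fin k → F, jointMC A B G m c
      = ∑ _m : Fin t → F, ((Nn (F:=F) (t:=t) : ℝ))⁻¹ :=
        Finset.sum_congr rfl fun m _ => pM_eq A B G m
    _ = 1 := by
        rw [Finset.sum_const, Finset.card_univ, nsmul_eq_mul]
        exact mul_inv_cancel₀ (Nn_pos (F:=F) (t:=t)).ne'


lemma Rcard_mul_real : (Rcard B G : ℝ) * (κn B G : ℝ) = (Dn (F:=F) (Δ:=Δ) (Θ:=Θ) : ℝ) := by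
  exact_mod_cast congrArg (Nat.cast (R := ℝ)) (Rcard_mul B G)

lemma sum_joint_coset (m : Fin t → F) :
    ∑ c ∈ coset A B G m, jointMC A B G m c = ((Nn (F:=F) (t:=t) : ℝ))⁻¹ := by
  have hN := Nn_pos (F:=F) (t:=t)
  have hD := Dn_pos (F:=F) (Δ:=Δ) (Θ:=Θ)
  rw [Finset.sum_congr rfl (fun c hc => joint_on A B G m hc), Finset.sum_const,
    coset_card, nsmul_eq_mul]
  have hk := Rcard_mul_real (B := B) (G := G)
  field_simp
  linear_combination hk

lemma sum_prod_coset (m : Fin t → F) :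
    ∑ c ∈ coset A B G m, pM A B G m * pC A B G c =
      ((Tset A B G).card : ℝ) / ((Nn (F:=F) (t:=t) : ℝ) * (Nn (F:=F) (t:=t) : ℝ)) := by
  have hN := Nn_pos (F:=F) (t:=t)
  have hD := Dn_pos (F:=F) (Δ:=Δ) (Θ:=Θ)
  have hk := Rcard_mul_real (B := B) (G := G)
  have hconst : ∀ c ∈ coset A B G m, pM A B G m * pC A B G c =
      ((Nn (F:=F) (t:=t) : ℝ))⁻¹ * ((κn B G : ℝ) * ((Tset A B G).card : ℝ) /
        ((Nn (F:=F) (t:=t)) * (Dn (F:=F) (Δ:=Δ) (Θ:=Θ)))) := by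
    intro c hc
    rw [pM_eq, pC_eq, Mc_card A B G ((mem_coset_iff A B G).mp hc)]
  rw [Finset.sum_congr rfl hconst, Finset.sum_const, coset_card, nsmul_eq_mul]
  field_simp
  linear_combination ((Tset A B G).card : ℝ) * hk

lemma inner_sum_ge (m : Fin t → F) :
    2 * (((Nn (F:=F) (t:=t) : ℝ))⁻¹ -
        ((Tset A B G).card : ℝ) / ((Nn (F:=F) (t:=t) : ℝ) * (Nn (F:=F) (t:=t) : ℝ))) ≤
      ∑ c : Fin k → F, |jointMC A B G m c - pM A B G m * pC A B G c| := by
  classical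
  have h1 := sum_joint_coset A B G m
  have h2 := sum_prod_coset A B G m
  have h3 : ∑ c ∈ (coset A B G m)ᶜ, pM A B G m * pC A B G c =
      ((Nn (F:=F) (t:=t) : ℝ))⁻¹ -
        ((Tset A B G).card : ℝ) / ((Nn (F:=F) (t:=t) : ℝ) * (Nn (F:=F) (t:=t) : ℝ)) := by
    have htot : ∑ c : Fin k → F, pM A B G m * pC A B G c = ((Nn (F:=F) (t:=t) : ℝ))⁻¹ := by
      rw [← Finset.mul_sum, sum_pC, mul_one, pM_eq]
    have := Finset.sum_add_sum_compl (coset A B G m) (fun c => pM A B G m * pC A B G c)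
    rw [h2] at this
    linarith [this.symm ▸ htot, htot]
  have h4 : ∑ c ∈ (coset A B G m)ᶜ, jointMC A B G m c = 0 := by
    apply Finset.sum_eq_zero
    intro c hc
    exact joint_off A B G m (Finset.mem_compl.mp hc)
  rw [← Finset.sum_add_sum_compl (coset A B G m)
    (fun c => |jointMC A B G m c - pM A B G m * pC A B G c|)]
  have hle1 : ∑ c ∈ coset A B G m, (jointMC A B G m c - pM A B G m * pC A B G c) ≤
      ∑ c ∈ coset A B G m, |jointMC A B G m c - pM A B G m * pC A B G c| :=
    Finset.sum_le_sum fun c _ => le_abs_self _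
  have hle2 : ∑ c ∈ (coset A B G m)ᶜ, (pM A B G m * pC A B G c - jointMC A B G m c) ≤
      ∑ c ∈ (coset A B G m)ᶜ, |jointMC A B G m c - pM A B G m * pC A B G c| := by
    refine Finset.sum_le_sum fun c _ => ?_
    rw [abs_sub_comm]
    exact le_abs_self _
  rw [Finset.sum_sub_distrib] at hle1 hle2
  rw [h1, h2] at hle1
  rw [h3, h4] at hle2
  linarith

lemma card_Tset_mul (hT : ¬ ∀ m : Fin t → F, ∃ p, Lm B G p = A.mulVec m) :
    Fintype.card F * (Tset A B G).card ≤ Nn (F:=F) (t:=t) := by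
  classical
  set Tsub : Submodule F (Fin t → F) := (LinearMap.range (Lm B G)).comap A.mulVecLin with hTsub
  have hcard : (Tset A B G).card = Fintype.card Tsub := by
    rw [Tset, ← Fintype.card_subtype]
    apply Fintype.card_congr
    apply Equiv.subtypeEquivRight
    intro x
    simp [hTsub, LinearMap.mem_range, Matrix.mulVecLin_apply, Submodule.mem_comap]
  have hne : Tsub ≠ ⊤ := by
    push_neg at hT
    obtain ⟨m, hm⟩ := hT
    intro h
    have : m ∈ Tsub := h ▸ Submodule.mem_top
    simp only [hTsub, Submodule.mem_comap, LinearMap.mem_range,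
      Matrix.mulVecLin_apply] at this
    obtain ⟨y, hy⟩ := this
    exact hm y hy
  have hrank : Module.finrank F Tsub < t := by
    have h1 := Submodule.finrank_lt (K := F) hne
    have h2 : Module.finrank F (Fin t → F) = t := by
      simp [Module.finrank_pi]
    omega
  have hTcard : Fintype.card Tsub = Fintype.card F ^ Module.finrank F Tsub :=
    Module.card_eq_pow_finrank
  have hNcard : Nn (F:=F) (t:=t) = Fintype.card F ^ t := by
    rw [Nn, Fintype.card_fun, Fintype.card_fin]
  rw [hcard, hTcard, hNcard, ← pow_succ']
  exact Nat.pow_le_pow_right Fintype.card_pos (by omega)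

lemma joint_eq_prod_of_full (hT : ∀ m : Fin t → F, ∃ p, Lm B G p = A.mulVec m)
    (m : Fin t → F) (c : Fin k → F) :
    jointMC A B G m c = pM A B G m * pC A B G c := by
  have hN := Nn_pos (F:=F) (t:=t)
  have hD := Dn_pos (F:=F) (Δ:=Δ) (Θ:=Θ)
  rw [pM_eq, pC_eq]
  by_cases hc : c ∈ coset A B G m
  · rw [joint_on A B G m hc]
    have hMc : Mc A B G c = univ := by
      rw [Finset.eq_univ_iff_forall]
      intro m'
      simp only [Mc, mem_filter, mem_univ, true_and]
      have hcc : ∃ p, Lm B G p = c - A.mulVec m := by simpa [coset] using hc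
      obtain ⟨p, hp⟩ := hcc
      obtain ⟨pm, hpm⟩ := hT m
      obtain ⟨pm', hpm'⟩ := hT m'
      refine ⟨p + pm - pm', ?_⟩
      rw [map_sub, map_add, hp, hpm, hpm']
      abel
    have hNn : (Fintype.card (Fin t → F)) = Nn (F:=F) (t:=t) := rfl
    rw [hMc, Finset.card_univ, hNn]
    field_simp
  · rw [joint_off A B G m hc]
    have hMc : Mc A B G c = ∅ := by
      rw [Finset.eq_empty_iff_forall_notMem]
      intro m' hm'
      apply hc
      simp only [Mc, mem_filter, mem_univ, true_and] at hm'
      obtain ⟨p, hp⟩ := hm'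
      obtain ⟨pm, hpm⟩ := hT m
      obtain ⟨pm', hpm'⟩ := hT m'
      simp only [coset, mem_filter, mem_univ, true_and]
      refine ⟨p + pm' - pm, ?_⟩
      rw [map_sub, map_add, hp, hpm, hpm']
      abel
    rw [hMc]
    simp

end TVaux

/-- For a linear code `C = AM + BK + GW` with `M, K, W` mutually
independent and uniform, the total variation distance `‖p_{M,C} − p_M ⊗ p_C‖₁` is
either `0` or at least `1 − 1/|F| ≥ 1/2`; consequently if it is at most some `ε < 1/2`,
then `M` and `C` are independent (perfect secrecy). -/
theorem tv_dichotomy_linear_code {F : Type} [Field F] [Fintype F] [DecidableEq F]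
    {k t Δ Θ : ℕ} (A : Matrix (Fin k) (Fin t) F) (B : Matrix (Fin k) (Fin Δ) F)
    (G : Matrix (Fin k) (Fin Θ) F) :
    (tvMC A B G = 0 ∨ 1 - (Fintype.card F : ℝ)⁻¹ ≤ tvMC A B G) ∧
    (1 / 2 : ℝ) ≤ 1 - (Fintype.card F : ℝ)⁻¹ ∧
    (∀ ε : ℝ, ε < 1 / 2 → tvMC A B G ≤ ε →
      ∀ (m : Fin t → F) (c : Fin k → F),
        jointMC A B G m c = pM A B G m * pC A B G c) := by
  classical
  have hN := TVaux.Nn_pos (F:=F) (t:=t)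
  have hq1 : (1:ℕ) < Fintype.card F := Fintype.one_lt_card
  have hq2 : (2:ℝ) ≤ (Fintype.card F : ℝ) := by exact_mod_cast hq1
  have hqpos : (0:ℝ) < (Fintype.card F : ℝ) := by linarith
  have part2 : (1/2 : ℝ) ≤ 1 - (Fintype.card F : ℝ)⁻¹ := by
    have h1 : (Fintype.card F : ℝ)⁻¹ ≤ 2⁻¹ := by
      apply inv_anti₀ (by norm_num) hq2
    have : (2:ℝ)⁻¹ = 1/2 := by norm_num
    linarith
  have part1 : tvMC A B G = 0 ∨ 1 - (Fintype.card F : ℝ)⁻¹ ≤ tvMC A B G := by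
    by_cases hT : ∀ m : Fin t → F, ∃ p, TVaux.Lm B G p = A.mulVec m
    · left
      rw [tvMC, Finset.sum_eq_zero, mul_zero]
      intro m _
      rw [Finset.sum_eq_zero]
      intro c _
      rw [TVaux.joint_eq_prod_of_full A B G hT m c, sub_self, abs_zero]
    · right
      have hcardN := TVaux.card_Tset_mul A B G hT
      set s : ℝ := ((TVaux.Tset A B G).card : ℝ) with hs
      set N : ℝ := (TVaux.Nn (F:=F) (t:=t) : ℝ) with hNd
      have hqs : (Fintype.card F : ℝ) * s ≤ N := by
        rw [hs, hNd]
        exact_mod_cast hcardN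
      have hsN : s / N ≤ (Fintype.card F : ℝ)⁻¹ := by
        have h1 : (Fintype.card F:ℝ)⁻¹ * ((Fintype.card F:ℝ) * s) = s := by
          field_simp
        have h2 : (Fintype.card F:ℝ)⁻¹ * ((Fintype.card F:ℝ) * s) ≤
            (Fintype.card F:ℝ)⁻¹ * N :=
          mul_le_mul_of_nonneg_left hqs (inv_nonneg.mpr hqpos.le)
        rw [div_le_iff₀ hN]
        rw [h1] at h2
        linarith [h2]
      have htv : 1 - s/N ≤ tvMC A B G := by
        rw [tvMC]
        have hbound : ∀ m ∈ (univ : Finset (Fin t → F)),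
            2 * (N⁻¹ - s/(N*N)) ≤
              ∑ c : Fin k → F, |jointMC A B G m c - pM A B G m * pC A B G c| :=
          fun m _ => TVaux.inner_sum_ge A B G m
        have hsum := Finset.card_nsmul_le_sum univ _ _ hbound
        rw [Finset.card_univ, nsmul_eq_mul] at hsum
        have hNn : ((Fintype.card (Fin t → F) : ℕ) : ℝ) = N := rfl
        rw [hNn] at hsum
        have hid : N * (2 * (N⁻¹ - s/(N*N))) = 2 * (1 - s/N) := by
          field_simp
        rw [hid] at hsum
        linarith
      linarith
  refine ⟨part1, part2, ?_⟩
  intro ε hε hle m c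
  have h0 : tvMC A B G = 0 := by
    rcases part1 with h | h
    · exact h
    · linarith
  have hS0 : ∑ m : Fin t → F, ∑ c : Fin k → F,
      |jointMC A B G m c - pM A B G m * pC A B G c| = 0 := by
    have hnn : 0 ≤ ∑ m : Fin t → F, ∑ c : Fin k → F,
        |jointMC A B G m c - pM A B G m * pC A B G c| :=
      Finset.sum_nonneg fun m _ => Finset.sum_nonneg fun c _ => abs_nonneg _
    rw [tvMC] at h0
    linarith
  have h1 := (Finset.sum_eq_zero_iff_of_nonneg
    (fun m _ => Finset.sum_nonneg fun c _ => abs_nonneg _)).mp hS0 m (mem_univ m)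
  have h2 := (Finset.sum_eq_zero_iff_of_nonneg
    (fun c _ => abs_nonneg _)).mp h1 c (mem_univ c)
  have h3 := abs_eq_zero.mp h2
  linarith
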